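/- Let δ > 0 and let σ be a point in the Euclidean plane. Suppose L is a line segment in the plane whose distance to σ is at least δ. Then for each integer k ≥ 0, the length of the intersection of L with the open annulus {z : 2^k δ < |z − σ| < 2^{k+1} δ} is at most 2^{k+2} δ, and consequently ∫_{L ∩ {|z−σ| ≥ δ}} |z − σ|^{−2} ds ≤ 8/δ, where ds is arclength measure along L. -/

import Mathlib

open MeasureTheory Metric
open scoped ENNReal

/-- A subset of a segment contained in a closed ball of radius `R` has length at most `2R`. -/
lemma subset_segment_ball_length (R : ℝ) (σ a b : EuclideanSpace ℝ (Fin 2))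
    (S : Set (EuclideanSpace ℝ (Fin 2))) (hS : S ⊆ segment ℝ a b)
    (hSB : ∀ z ∈ S, dist z σ ≤ R) :
    μH[1] S ≤ ENNReal.ofReal (2 * R) := by
  by_cases hab : a = b
  · subst hab
    calc μH[1] S ≤ μH[1] (segment ℝ a a) := measure_mono hS
      _ = edist a a := hausdorffMeasure_segment a a
      _ = 0 := edist_self a
      _ ≤ ENNReal.ofReal (2 * R) := by positivity
  · have hd : (0:ℝ) < dist a b := dist_pos.2 hab
    set f : ℝ → EuclideanSpace ℝ (Fin 2) := fun t => AffineMap.lineMap a b t with hf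
    set T : Set ℝ := Set.Icc (0:ℝ) 1 ∩ f ⁻¹' S with hT
    have hST : S ⊆ f '' T := by
      intro z hz
      have hzseg := hS hz
      rw [segment_eq_image_lineMap] at hzseg
      obtain ⟨t, ht, htz⟩ := hzseg
      exact ⟨t, ⟨ht, by simpa [hf, htz] using hz⟩, htz⟩
    have hdiam : EMetric.diam T ≤ ENNReal.ofReal (2 * R / dist a b) := by
      apply EMetric.diam_le
      intro x hx y hy
      rw [edist_dist]
      apply ENNReal.ofReal_le_ofReal
      have hfx : f x ∈ S := hx.2
      have hfy : f y ∈ S := hy.2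
      have h1 : dist (f x) (f y) ≤ 2 * R := by
        calc dist (f x) (f y) ≤ dist (f x) σ + dist σ (f y) := dist_triangle _ _ _
          _ ≤ R + R := add_le_add (hSB _ hfx) (by rw [dist_comm]; exact hSB _ hfy)
          _ = 2 * R := by ring
      have h2 : dist (f x) (f y) = dist x y * dist a b := by
        simp [hf, dist_lineMap_lineMap]
      rw [le_div_iff₀ hd]
      rw [h2] at h1
      exact h1
    calc μH[1] S ≤ μH[1] (f '' T) := measure_mono hST
      _ = nndist a b • μH[1] T := hausdorffMeasure_lineMap_image a b T
      _ = (nndist a b : ℝ≥0∞) * volume T := by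
          rw [hausdorffMeasure_real]; rfl
      _ ≤ (nndist a b : ℝ≥0∞) * ENNReal.ofReal (2 * R / dist a b) := by
          gcongr
          exact (Real.volume_le_diam T).trans hdiam
      _ = ENNReal.ofReal (dist a b) * ENNReal.ofReal (2 * R / dist a b) := by
          rw [← edist_nndist, edist_dist]
      _ = ENNReal.ofReal (dist a b * (2 * R / dist a b)) := by
          rw [ENNReal.ofReal_mul dist_nonneg]
      _ = ENNReal.ofReal (2 * R) := by
          rw [mul_div_cancel₀ _ hd.ne']

theorem segment_annulus_length_and_integral_bound
    (δ : ℝ) (hδ : 0 < δ) (σ a b : EuclideanSpace ℝ (Fin 2))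
    (hdist : ∀ z ∈ segment ℝ a b, δ ≤ dist z σ) :
    (∀ k : ℕ,
      μH[1] (segment ℝ a b ∩ {z | 2 ^ k * δ < dist z σ ∧ dist z σ < 2 ^ (k + 1) * δ})
        ≤ ENNReal.ofReal (2 ^ (k + 2) * δ)) ∧
    (∫⁻ z in segment ℝ a b ∩ {z | δ ≤ dist z σ},
        ENNReal.ofReal ((dist z σ) ^ 2)⁻¹ ∂μH[1])
      ≤ ENNReal.ofReal (8 / δ) := by
  -- measure bound for generalized annuli (with non-strict lower bound)
  have key : ∀ k : ℕ, ∀ S : Set (EuclideanSpace ℝ (Fin 2)),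
      S ⊆ segment ℝ a b → (∀ z ∈ S, dist z σ < 2 ^ (k + 1) * δ) →
      μH[1] S ≤ ENNReal.ofReal (2 ^ (k + 2) * δ) := by
    intro k S hSseg hSlt
    have := subset_segment_ball_length (2 ^ (k + 1) * δ) σ a b S hSseg
      (fun z hz => (hSlt z hz).le)
    calc μH[1] S ≤ ENNReal.ofReal (2 * (2 ^ (k + 1) * δ)) := this
      _ = ENNReal.ofReal (2 ^ (k + 2) * δ) := by ring_nf
  constructor
  · intro k
    exact key k _ Set.inter_subset_left (fun z hz => hz.2.2)
  · set A : ℕ → Set (EuclideanSpace ℝ (Fin 2)) := fun k =>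
      segment ℝ a b ∩ {z | 2 ^ k * δ ≤ dist z σ ∧ dist z σ < 2 ^ (k + 1) * δ} with hA
    have hcover : segment ℝ a b ∩ {z | δ ≤ dist z σ} ⊆ ⋃ k, A k := by
      rintro z ⟨hzseg, hzδ⟩
      have hx1 : (1:ℝ) ≤ dist z σ / δ := (le_div_iff₀ hδ).2 (by simpa using hzδ)
      obtain ⟨k, hk1, hk2⟩ := exists_nat_pow_near hx1 (one_lt_two)
      refine Set.mem_iUnion.2 ⟨k, hzseg, ?_, ?_⟩
      · calc (2:ℝ) ^ k * δ ≤ (dist z σ / δ) * δ := by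
              have := mul_le_mul_of_nonneg_right hk1 hδ.le; linarith
          _ = dist z σ := div_mul_cancel₀ _ hδ.ne'
      · calc dist z σ = (dist z σ / δ) * δ := (div_mul_cancel₀ _ hδ.ne').symm
          _ < 2 ^ (k + 1) * δ := by
              exact mul_lt_mul_of_pos_right hk2 hδ
    have hAle : ∀ k : ℕ, (∫⁻ z in A k, ENNReal.ofReal ((dist z σ) ^ 2)⁻¹ ∂μH[1])
        ≤ ENNReal.ofReal (4 / δ * (1 / 2) ^ k) := by
      intro k
      have hpow : (0:ℝ) < 2 ^ k * δ := by positivity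
      have hbound : ∀ z ∈ A k, ENNReal.ofReal ((dist z σ) ^ 2)⁻¹
          ≤ ENNReal.ofReal (((2:ℝ) ^ k * δ) ^ 2)⁻¹ := by
        intro z hz
        apply ENNReal.ofReal_le_ofReal
        have h1 : (2:ℝ) ^ k * δ ≤ dist z σ := hz.2.1
        have h2 : ((2:ℝ) ^ k * δ) ^ 2 ≤ (dist z σ) ^ 2 := by nlinarith
        exact inv_anti₀ (by positivity) h2
      calc (∫⁻ z in A k, ENNReal.ofReal ((dist z σ) ^ 2)⁻¹ ∂μH[1])
          ≤ ∫⁻ _ in A k, ENNReal.ofReal (((2:ℝ) ^ k * δ) ^ 2)⁻¹ ∂μH[1] :=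
            setLIntegral_mono measurable_const hbound
        _ = ENNReal.ofReal (((2:ℝ) ^ k * δ) ^ 2)⁻¹ * μH[1] (A k) :=
            setLIntegral_const _ _
        _ ≤ ENNReal.ofReal (((2:ℝ) ^ k * δ) ^ 2)⁻¹
            * ENNReal.ofReal (2 ^ (k + 2) * δ) := by
            gcongr
            exact key k _ Set.inter_subset_left (fun z hz => hz.2.2)
        _ = ENNReal.ofReal ((((2:ℝ) ^ k * δ) ^ 2)⁻¹ * (2 ^ (k + 2) * δ)) := by
            rw [← ENNReal.ofReal_mul (by positivity)]
        _ ≤ ENNReal.ofReal (4 / δ * (1 / 2) ^ k) := by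
            apply ENNReal.ofReal_le_ofReal
            have : (((2:ℝ) ^ k * δ) ^ 2)⁻¹ * (2 ^ (k + 2) * δ) = 4 / δ * (1 / 2) ^ k := by
              field_simp
              rw [one_div, inv_pow]
              field_simp
              ring
            rw [this]
    calc (∫⁻ z in segment ℝ a b ∩ {z | δ ≤ dist z σ},
            ENNReal.ofReal ((dist z σ) ^ 2)⁻¹ ∂μH[1])
        ≤ ∫⁻ z in ⋃ k, A k, ENNReal.ofReal ((dist z σ) ^ 2)⁻¹ ∂μH[1] :=
          lintegral_mono_set hcover
      _ ≤ ∑' k, ∫⁻ z in A k, ENNReal.ofReal ((dist z σ) ^ 2)⁻¹ ∂μH[1] :=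
          lintegral_iUnion_le _ _
      _ ≤ ∑' k, ENNReal.ofReal (4 / δ * (1 / 2) ^ k) := ENNReal.tsum_le_tsum hAle
      _ = ∑' k : ℕ, ENNReal.ofReal (4 / δ) * (ENNReal.ofReal (1 / 2)) ^ k := by
          congr 1; ext k
          rw [← ENNReal.ofReal_pow (by norm_num), ← ENNReal.ofReal_mul (by positivity)]
      _ = ENNReal.ofReal (4 / δ) * ∑' k : ℕ, (ENNReal.ofReal (1 / 2)) ^ k :=
          ENNReal.tsum_mul_left
      _ = ENNReal.ofReal (4 / δ) * 2 := by
          have : ENNReal.ofReal (1 / 2) = 2⁻¹ := by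
            rw [ENNReal.ofReal_div_of_pos (by norm_num)]
            simp
          rw [this, ENNReal.tsum_geometric, ENNReal.one_sub_inv_two, inv_inv]
      _ = ENNReal.ofReal (8 / δ) := by
          rw [show (8:ℝ) / δ = 4 / δ * 2 by ring, ENNReal.ofReal_mul (by positivity),
            ENNReal.ofReal_ofNat]
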